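/- Suppose λ_i, μ_i > 0 for i = 1,…,D+1, s₀ = 0 < s₁ < … < s_D < s_{D+1} = t, and the matching conditions λ_i·e^{−μ_i(t−s_i)} = λ_{i+1}·e^{−μ_{i+1}(t−s_i)} hold for i = 1,…,D. Then for the perturbed value with jump epochs s_i + v_i·ε (v₀ = v_{D+1} = 0), the difference Σ_{i=1}^{D+1} (λ_i/μ_i)e^{−μ_i(t−s_i)}(1−e^{μ_i v_i ε}) − Σ_{i=1}^{D+1} (λ_i/μ_i)e^{−μ_i(t−s_{i-1})}(1−e^{μ_i v_{i-1} ε}) equals Σ_{i=1}^{D} ω_i (v_i ε)² + o(ε²) as ε → 0, where ω_i = (λ_{i+1}/2)(μ_{i+1} − μ_i)e^{−μ_{i+1}(t−s_i)}. -/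

import Mathlib

open Real Finset Asymptotics Filter

lemma exp_taylor2 : (fun x : ℝ => Real.exp x - (1 + x + x ^ 2 / 2)) =o[nhds (0:ℝ)] fun x => x ^ 2 := by
  have hO : (fun x : ℝ => Real.exp x - (1 + x + x ^ 2 / 2)) =O[nhds (0:ℝ)] fun x => |x| ^ 3 := by
    rw [Asymptotics.isBigO_iff]
    refine ⟨4 / (6 * 3), ?_⟩
    filter_upwards [Metric.closedBall_mem_nhds (0:ℝ) one_pos] with x hx
    have hx1 : |x| ≤ 1 := by simpa [Real.dist_eq] using hx
    have h := Real.exp_bound hx1 (n := 3) (by norm_num)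
    have hsum : ∑ m ∈ Finset.range 3, x ^ m / m.factorial = 1 + x + x ^ 2 / 2 := by
      simp [Finset.sum_range_succ, Nat.factorial]
    rw [hsum] at h
    have h4 : ((3:ℕ).succ / ((3:ℕ).factorial * (3:ℕ)) : ℝ) = 4 / (6 * 3) := by
      norm_num [Nat.factorial]
    rw [h4] at h
    calc ‖Real.exp x - (1 + x + x ^ 2 / 2)‖ = |Real.exp x - (1 + x + x ^ 2 / 2)| := rfl
      _ ≤ |x| ^ 3 * (4 / (6 * 3)) := h
      _ = 4 / (6 * 3) * ‖|x| ^ 3‖ := by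
          rw [Real.norm_of_nonneg (by positivity : (0:ℝ) ≤ |x| ^ 3)]; ring
  have ho : (fun x : ℝ => |x| ^ 3) =o[nhds (0:ℝ)] fun x => x ^ 2 := by
    rw [Asymptotics.isLittleO_iff]
    intro c hc
    filter_upwards [Metric.closedBall_mem_nhds (0:ℝ) hc] with x hx
    have hxc : |x| ≤ c := by simpa [Real.dist_eq] using hx
    have h1 : ‖|x| ^ 3‖ = |x| ^ 3 := Real.norm_of_nonneg (by positivity)
    have h2 : ‖x ^ 2‖ = x ^ 2 := Real.norm_of_nonneg (sq_nonneg x)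
    rw [h1, h2]
    calc |x| ^ 3 = |x| * |x| ^ 2 := by ring
      _ ≤ c * |x| ^ 2 := by
          apply mul_le_mul_of_nonneg_right hxc (by positivity)
      _ = c * x ^ 2 := by rw [sq_abs]
  exact hO.trans_isLittleO ho

lemma key_littleO (c : ℝ) :
    (fun ε : ℝ => (1 - Real.exp (c * ε)) + (c * ε + c ^ 2 * ε ^ 2 / 2)) =o[nhds (0:ℝ)]
      fun ε : ℝ => ε ^ 2 := by
  have ht : Filter.Tendsto (fun ε : ℝ => c * ε) (nhds 0) (nhds 0) := by
    simpa using (continuous_mul_left c).tendsto (0:ℝ)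
  have h := exp_taylor2.comp_tendsto ht
  have h2 : (fun ε : ℝ => (c * ε) ^ 2) =O[nhds (0:ℝ)] fun ε : ℝ => ε ^ 2 := by
    have := (Asymptotics.isBigO_refl (fun ε : ℝ => ε ^ 2) (nhds (0:ℝ))).const_mul_left (c ^ 2)
    simpa [mul_pow] using this
  have h3 := (h.trans_isBigO h2).neg_left
  have heq : (fun ε : ℝ => -(((fun x : ℝ => Real.exp x - (1 + x + x ^ 2 / 2)) ∘ fun ε : ℝ => c * ε) ε))
      = fun ε : ℝ => (1 - Real.exp (c * ε)) + (c * ε + c ^ 2 * ε ^ 2 / 2) := by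
    funext ε; simp only [Function.comp]; ring
  rwa [heq] at h3

theorem perturbation_second_order_expansion (D : ℕ) (hD : 1 ≤ D)
    (t : ℝ) (lam mu s v : ℕ → ℝ)
    (hlam : ∀ i ∈ Finset.Icc 1 (D + 1), 0 < lam i)
    (hmu : ∀ i ∈ Finset.Icc 1 (D + 1), 0 < mu i)
    (hs0 : s 0 = 0) (hst : s (D + 1) = t)
    (hmono : ∀ i ∈ Finset.Icc 0 D, s i < s (i + 1))
    (hmatch : ∀ i ∈ Finset.Icc 1 D,
      lam i * exp (-mu i * (t - s i)) = lam (i + 1) * exp (-mu (i + 1) * (t - s i)))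
    (hv0 : v 0 = 0) (hvD : v (D + 1) = 0) :
    (fun ε : ℝ =>
        (∑ i ∈ Finset.Icc 1 (D + 1),
            (lam i / mu i) * exp (-mu i * (t - s i)) * (1 - exp (mu i * (v i * ε))) -
          ∑ i ∈ Finset.Icc 1 (D + 1),
            (lam i / mu i) * exp (-mu i * (t - s (i - 1))) *
              (1 - exp (mu i * (v (i - 1) * ε)))) -
        ∑ i ∈ Finset.Icc 1 D,
          ((lam (i + 1) / 2) * (mu (i + 1) - mu i) * exp (-mu (i + 1) * (t - s i))) *
            (v i * ε) ^ 2)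
      =o[nhds (0 : ℝ)] fun ε : ℝ => ε ^ 2 := by
  classical
  -- abbreviations
  set f : ℕ → ℝ := fun i => lam i * Real.exp (-mu i * (t - s i)) * v i with hf
  set g : ℕ → ℝ := fun i => lam i * Real.exp (-mu i * (t - s (i - 1))) * v (i - 1) with hg
  set p : ℕ → ℝ := fun i => lam i * mu i * Real.exp (-mu i * (t - s i)) * v i ^ 2 with hp
  set q : ℕ → ℝ := fun i => lam i * mu i * Real.exp (-mu i * (t - s (i - 1))) * v (i - 1) ^ 2 with hq
  set r : ℕ → ℝ := fun i =>
    lam (i + 1) * (mu (i + 1) - mu i) * Real.exp (-mu (i + 1) * (t - s i)) * v i ^ 2 with hr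
  -- reindexing tools
  have hreindex : ∀ G : ℕ → ℝ, ∑ i ∈ Finset.Icc 1 (D + 1), G i = ∑ i ∈ Finset.Icc 0 D, G (1 + i) := by
    intro G
    have hmap : (Finset.Icc 0 D).map (addLeftEmbedding 1) = Finset.Icc 1 (D + 1) := by
      rw [Finset.map_add_left_Icc]
      congr 1
      omega
    rw [← hmap, Finset.sum_map]
    simp [addLeftEmbedding]
  have hsplit0 : ∀ G : ℕ → ℝ, ∑ i ∈ Finset.Icc 0 D, G i = G 0 + ∑ i ∈ Finset.Icc 1 D, G i := by
    intro G
    have h0 : Finset.Icc 0 D = insert 0 (Finset.Icc 1 D) := by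
      ext x; simp [Finset.mem_Icc]; omega
    rw [h0, Finset.sum_insert (by simp)]
  have htop : ∀ G : ℕ → ℝ, ∑ i ∈ Finset.Icc 1 (D + 1), G i = (∑ i ∈ Finset.Icc 1 D, G i) + G (D + 1) := by
    intro G
    exact Finset.sum_Icc_succ_top (by omega) G
  -- Identity 1 : linear coefficients cancel
  have I1 : ∑ i ∈ Finset.Icc 1 (D + 1), f i = ∑ i ∈ Finset.Icc 1 (D + 1), g i := by
    rw [htop f, hreindex g, hsplit0]
    have h0 : g (1 + 0) = 0 := by simp [hg, hv0]
    have hD1 : f (D + 1) = 0 := by simp [hf, hvD]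
    rw [h0, hD1, zero_add, add_zero]
    apply Finset.sum_congr rfl
    intro i hi
    have hm := hmatch i hi
    simp only [hf, hg, Nat.add_sub_cancel_left]
    rw [add_comm 1 i]
    linear_combination v i * hm
  -- Identity 2 : quadratic coefficients
  have I2 : (∑ i ∈ Finset.Icc 1 (D + 1), p i) + ∑ i ∈ Finset.Icc 1 D, r i
      = ∑ i ∈ Finset.Icc 1 (D + 1), q i := by
    rw [htop p, hreindex q, hsplit0]
    have h0 : q (1 + 0) = 0 := by simp [hq, hv0]
    have hD1 : p (D + 1) = 0 := by simp [hp, hvD]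
    rw [h0, hD1, zero_add, add_zero, ← Finset.sum_add_distrib]
    apply Finset.sum_congr rfl
    intro i hi
    have hm := hmatch i hi
    simp only [hp, hq, hr, Nat.add_sub_cancel_left]
    rw [add_comm 1 i]
    linear_combination mu i * v i ^ 2 * hm
  -- the dominating little-o sum
  have hsum : (fun ε : ℝ => ∑ i ∈ Finset.Icc 1 (D + 1),
      ((lam i / mu i) * Real.exp (-mu i * (t - s i)) *
          ((1 - Real.exp ((mu i * v i) * ε)) + ((mu i * v i) * ε + (mu i * v i) ^ 2 * ε ^ 2 / 2)) -
        (lam i / mu i) * Real.exp (-mu i * (t - s (i - 1))) *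
          ((1 - Real.exp ((mu i * v (i - 1)) * ε)) +
            ((mu i * v (i - 1)) * ε + (mu i * v (i - 1)) ^ 2 * ε ^ 2 / 2))))
      =o[nhds (0 : ℝ)] fun ε : ℝ => ε ^ 2 := by
    apply Asymptotics.IsLittleO.fun_sum
    intro i _
    exact ((key_littleO (mu i * v i)).const_mul_left _).sub
      ((key_littleO (mu i * v (i - 1))).const_mul_left _)
  -- equality of the two functions
  have hEq : (fun ε : ℝ =>
        (∑ i ∈ Finset.Icc 1 (D + 1),
            (lam i / mu i) * exp (-mu i * (t - s i)) * (1 - exp (mu i * (v i * ε))) -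
          ∑ i ∈ Finset.Icc 1 (D + 1),
            (lam i / mu i) * exp (-mu i * (t - s (i - 1))) *
              (1 - exp (mu i * (v (i - 1) * ε)))) -
        ∑ i ∈ Finset.Icc 1 D,
          ((lam (i + 1) / 2) * (mu (i + 1) - mu i) * exp (-mu (i + 1) * (t - s i))) *
            (v i * ε) ^ 2)
      = (fun ε : ℝ => ∑ i ∈ Finset.Icc 1 (D + 1),
      ((lam i / mu i) * Real.exp (-mu i * (t - s i)) *
          ((1 - Real.exp ((mu i * v i) * ε)) + ((mu i * v i) * ε + (mu i * v i) ^ 2 * ε ^ 2 / 2)) -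
        (lam i / mu i) * Real.exp (-mu i * (t - s (i - 1))) *
          ((1 - Real.exp ((mu i * v (i - 1)) * ε)) +
            ((mu i * v (i - 1)) * ε + (mu i * v (i - 1)) ^ 2 * ε ^ 2 / 2)))) := by
    funext ε
    -- expand RHS termwise
    have hterm : ∀ i ∈ Finset.Icc 1 (D + 1),
        (lam i / mu i) * Real.exp (-mu i * (t - s i)) *
          ((1 - Real.exp ((mu i * v i) * ε)) + ((mu i * v i) * ε + (mu i * v i) ^ 2 * ε ^ 2 / 2)) -
        (lam i / mu i) * Real.exp (-mu i * (t - s (i - 1))) *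
          ((1 - Real.exp ((mu i * v (i - 1)) * ε)) +
            ((mu i * v (i - 1)) * ε + (mu i * v (i - 1)) ^ 2 * ε ^ 2 / 2))
        = ((lam i / mu i) * Real.exp (-mu i * (t - s i)) * (1 - Real.exp (mu i * (v i * ε))) -
            (lam i / mu i) * Real.exp (-mu i * (t - s (i - 1))) *
              (1 - Real.exp (mu i * (v (i - 1) * ε))))
          + ((f i - g i) * ε + (p i - q i) * (ε ^ 2 / 2)) := by
      intro i hi
      have hmi : mu i ≠ 0 := (hmu i hi).ne'
      simp only [hf, hg, hp, hq, mul_assoc]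
      field_simp
      ring
    rw [Finset.sum_congr rfl hterm, Finset.sum_add_distrib, Finset.sum_sub_distrib,
      Finset.sum_add_distrib, ← Finset.sum_mul, ← Finset.sum_mul,
      Finset.sum_sub_distrib, Finset.sum_sub_distrib]
    -- now handle the omega sum
    have hW : ∑ i ∈ Finset.Icc 1 D,
        ((lam (i + 1) / 2) * (mu (i + 1) - mu i) * Real.exp (-mu (i + 1) * (t - s i))) *
          (v i * ε) ^ 2 = (∑ i ∈ Finset.Icc 1 D, r i) * (ε ^ 2 / 2) := by
      rw [Finset.sum_mul]
      apply Finset.sum_congr rfl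
      intro i _
      simp only [hr]
      ring
    rw [hW]
    linear_combination (-ε) * I1 + (-(ε ^ 2 / 2)) * I2
  rw [hEq]
  exact hsum
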